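/- arXiv:2604.04959 — 5 statements merged into one kernel-verified Lean document; each statement's English description precedes it below -/
import Mathlib

section
/- Let f: M → M be measurable, 𝒫 a finite measurable partition, μ a (not necessarily invariant) probability measure, and n ≥ 1. Then (1/n) H(⋁_{i=0}^{n−1} f^{−i}𝒫, μ) ≤ H(𝒫, (1/n) ∑_{i=0}^{n−1} (f*)^i μ). In particular the entropy of a finite partition is a concave function of the measure: H(𝒫, ∑_k λ_k μ_k) ≥ ∑_k λ_k H(𝒫, μ_k) for any finite convex combination. -/
open MeasureTheory
open scoped NNReal ENNReal
open Real (negMulLog)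

attribute [local instance] Classical.propDecidable

/-- A finite measurable partition of `M`. -/
def IsPartition {M : Type*} [MeasurableSpace M] (P : Finset (Set M)) : Prop :=
  (∀ A ∈ P, MeasurableSet A) ∧ (⋃ A ∈ P, A) = Set.univ ∧
    ∀ A ∈ P, ∀ B ∈ P, A ≠ B → A ∩ B = ∅

/-- The entropy `H(𝒫, μ) = −∑_{P ∈ 𝒫} μ(P) log μ(P)` (convention `0·log 0 = 0`). -/
noncomputable def partEnt {M : Type*} [MeasurableSpace M]
    (μ : Measure M) (P : Finset (Set M)) : ℝ :=
  -∑ A ∈ P, (μ A).toReal * Real.log (μ A).toReal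

/-- The dynamical join `⋁_{i=0}^{n-1} f⁻ⁱ 𝒫`. -/
noncomputable def joinIter {M : Type*} (f : M → M) (P : Finset (Set M)) (n : ℕ) :
    Finset (Set M) :=
  Finset.image (fun a : Fin n → {A : Set M // A ∈ P} =>
    ⋂ i : Fin n, f^[(i : ℕ)] ⁻¹' ((a i : Set M))) Finset.univ

lemma sum_image_le' {γ α : Type*} [DecidableEq α] (s : Finset γ) (g : γ → α) (f : α → ℝ)
    (h : ∀ x ∈ s, 0 ≤ f (g x)) : ∑ y ∈ s.image g, f y ≤ ∑ x ∈ s, f (g x) := by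
  classical
  induction s using Finset.induction with
  | empty => simp
  | @insert c s' hx ih =>
    rw [Finset.image_insert, Finset.sum_insert hx]
    by_cases hg : g c ∈ s'.image g
    · rw [Finset.insert_eq_self.2 hg]
      have := ih (fun x hx => h x (Finset.mem_insert_of_mem hx))
      have h0 : 0 ≤ f (g c) := h c (Finset.mem_insert_self _ _)
      linarith
    · rw [Finset.sum_insert hg]
      exact add_le_add_right (ih (fun x hx => h x (Finset.mem_insert_of_mem hx))) _

lemma key_ineq {α β : Type*} (s : Finset α) (t : Finset β) (p : α → β → ℝ) (a : α → ℝ) (b : β → ℝ)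
    (hp : ∀ A B, 0 ≤ p A B)
    (ha : ∀ A ∈ s, ∑ B ∈ t, p A B = a A)
    (hb : ∀ B ∈ t, ∑ A ∈ s, p A B = b B)
    (hsum : ∑ A ∈ s, a A = 1) :
    ∑ A ∈ s, ∑ B ∈ t, negMulLog (p A B) ≤
      ∑ A ∈ s, negMulLog (a A) + ∑ B ∈ t, negMulLog (b B) := by
  have ha0 : ∀ A ∈ s, 0 ≤ a A := fun A hA => (ha A hA) ▸ Finset.sum_nonneg (fun B _ => hp A B)
  have hpa : ∀ A ∈ s, ∀ B ∈ t, p A B ≤ a A := fun A hA B hB =>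
    (ha A hA) ▸ Finset.single_le_sum (fun B _ => hp A B) hB
  -- step: per-A identity
  have hA_id : ∀ A ∈ s, ∑ B ∈ t, negMulLog (p A B)
      = negMulLog (a A) + ∑ B ∈ t, a A * negMulLog (p A B / a A) := by
    intro A hA
    by_cases h0 : a A = 0
    · have hz : ∀ B ∈ t, p A B = 0 := by
        intro B hB
        have := (Finset.sum_eq_zero_iff_of_nonneg (fun B _ => hp A B)).1 ((ha A hA).trans h0)
        exact this B hB
      rw [Finset.sum_congr rfl (fun B hB => by rw [hz B hB]), h0]
      simp [Real.negMulLog_zero]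
    · have hpos : 0 < a A := lt_of_le_of_ne (ha0 A hA) (Ne.symm h0)
      have hterm : ∀ B ∈ t, a A * negMulLog (p A B / a A) = negMulLog (p A B) + p A B * Real.log (a A) := by
        intro B hB
        by_cases hp0 : p A B = 0
        · simp [hp0, Real.negMulLog_zero]
        · unfold Real.negMulLog
          rw [Real.log_div hp0 h0]
          field_simp
          ring
      rw [Finset.sum_congr rfl hterm, Finset.sum_add_distrib, ← Finset.sum_mul, ha A hA]
      unfold Real.negMulLog
      ring
  rw [Finset.sum_congr rfl hA_id, Finset.sum_add_distrib]
  refine add_le_add_right ?_ _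
  rw [Finset.sum_comm]
  refine Finset.sum_le_sum (fun B hB => ?_)
  have jensen := (Real.strictConcaveOn_negMulLog.concaveOn).le_map_sum
    (t := s) (w := a) (p := fun A => p A B / a A)
    (fun A hA => ha0 A hA) hsum
    (fun A hA => div_nonneg (hp A B) (ha0 A hA))
  have hpt : ∑ A ∈ s, a A • (p A B / a A) = b B := by
    rw [← hb B hB]
    refine Finset.sum_congr rfl (fun A hA => ?_)
    by_cases h0 : a A = 0
    · have : p A B = 0 := le_antisymm ((hpa A hA B hB).trans h0.le) (hp A B)
      simp [h0, this]
    · rw [smul_eq_mul, mul_div_cancel₀ _ h0]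
  rw [hpt] at jensen
  simpa [smul_eq_mul] using jensen

attribute [local instance] Classical.propDecidable

lemma partEnt_eq {M : Type*} [MeasurableSpace M] (μ : Measure M) (P : Finset (Set M)) :
    partEnt μ P = ∑ A ∈ P, Real.negMulLog ((μ A).toReal) := by
  simp [partEnt, Real.negMulLog, neg_mul]

lemma meas01 {M : Type*} [MeasurableSpace M] (μ : Measure M) [IsProbabilityMeasure μ]
    (A : Set M) : 0 ≤ (μ A).toReal ∧ (μ A).toReal ≤ 1 := by
  refine ⟨ENNReal.toReal_nonneg, ?_⟩
  have : μ A ≤ 1 := prob_le_one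
  simpa using ENNReal.toReal_mono (by simp) this

lemma sum_inter {M : Type*} [MeasurableSpace M] (μ : Measure M) [IsProbabilityMeasure μ]
    {R : Finset (Set M)} (hR : IsPartition R) {A : Set M} (hA : MeasurableSet A) :
    ∑ B ∈ R, ((μ (A ∩ B)).toReal) = (μ A).toReal := by
  have hdis : Set.PairwiseDisjoint (↑R) (fun B => A ∩ B) := by
    intro B hB B' hB' hne
    have h := hR.2.2 B hB B' hB' hne
    rw [Function.onFun, Set.disjoint_iff_inter_eq_empty]
    rw [show (A ∩ B) ∩ (A ∩ B') = A ∩ (B ∩ B') by ext x; simp; tauto, h, Set.inter_empty]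
  have hm : ∀ B ∈ R, MeasurableSet (A ∩ B) := fun B hB => hA.inter (hR.1 B hB)
  have hu : (⋃ B ∈ R, A ∩ B) = A := by
    rw [← Set.inter_iUnion₂, hR.2.1, Set.inter_univ]
  have := measure_biUnion_finset (μ := μ) hdis hm
  rw [hu] at this
  rw [this, ENNReal.toReal_sum (fun B _ => measure_ne_top μ _)]

noncomputable def pjoin {M : Type*} (Q R : Finset (Set M)) : Finset (Set M) :=
  (Q ×ˢ R).image (fun p => p.1 ∩ p.2)

lemma pjoin_isPartition {M : Type*} [MeasurableSpace M] {Q R : Finset (Set M)}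
    (hQ : IsPartition Q) (hR : IsPartition R) : IsPartition (pjoin Q R) := by
  refine ⟨?_, ?_, ?_⟩
  · intro C hC
    obtain ⟨⟨A, B⟩, hmem, rfl⟩ := Finset.mem_image.1 hC
    rw [Finset.mem_product] at hmem
    exact (hQ.1 A hmem.1).inter (hR.1 B hmem.2)
  · apply Set.eq_univ_of_forall
    intro x
    have hx1 : x ∈ ⋃ A ∈ Q, A := by rw [hQ.2.1]; trivial
    have hx2 : x ∈ ⋃ B ∈ R, B := by rw [hR.2.1]; trivial
    simp only [Set.mem_iUnion] at hx1 hx2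
    obtain ⟨A, hA, hxA⟩ := hx1
    obtain ⟨B, hB, hxB⟩ := hx2
    simp only [Set.mem_iUnion]
    exact ⟨A ∩ B, Finset.mem_image.2 ⟨(A, B), Finset.mem_product.2 ⟨hA, hB⟩, rfl⟩, hxA, hxB⟩
  · intro C hC D hD hne
    obtain ⟨⟨A, B⟩, hmem, rfl⟩ := Finset.mem_image.1 hC
    obtain ⟨⟨A', B'⟩, hmem', rfl⟩ := Finset.mem_image.1 hD
    rw [Finset.mem_product] at hmem hmem'
    by_cases hAA : A = A'
    · have hBB : B ≠ B' := by rintro rfl; exact hne (by rw [hAA])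
      have := hR.2.2 B hmem.2 B' hmem'.2 hBB
      ext x; simp only [Set.mem_inter_iff, Set.mem_empty_iff_false, iff_false]
      rintro ⟨⟨_, hxB⟩, _, hxB'⟩
      exact absurd (Set.mem_inter hxB hxB') (by rw [this]; exact id)
    · have := hQ.2.2 A hmem.1 A' hmem'.1 hAA
      ext x; simp only [Set.mem_inter_iff, Set.mem_empty_iff_false, iff_false]
      rintro ⟨⟨hxA, _⟩, hxA', _⟩
      exact absurd (Set.mem_inter hxA hxA') (by rw [this]; exact id)

lemma partEnt_pjoin_le {M : Type*} [MeasurableSpace M] (μ : Measure M) [IsProbabilityMeasure μ]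
    {Q R : Finset (Set M)} (hQ : IsPartition Q) (hR : IsPartition R) :
    partEnt μ (pjoin Q R) ≤ partEnt μ Q + partEnt μ R := by
  rw [partEnt_eq, partEnt_eq, partEnt_eq]
  calc ∑ C ∈ pjoin Q R, Real.negMulLog ((μ C).toReal)
      ≤ ∑ p ∈ Q ×ˢ R, Real.negMulLog ((μ (p.1 ∩ p.2)).toReal) := by
        exact sum_image_le' _ _ _ (fun p _ =>
          Real.negMulLog_nonneg (meas01 μ _).1 (meas01 μ _).2)
    _ = ∑ A ∈ Q, ∑ B ∈ R, Real.negMulLog ((μ (A ∩ B)).toReal) := by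
        rw [Finset.sum_product]
    _ ≤ _ := by
        refine key_ineq Q R (fun A B => (μ (A ∩ B)).toReal) (fun A => (μ A).toReal)
          (fun B => (μ B).toReal) (fun A B => ENNReal.toReal_nonneg) ?_ ?_ ?_
        · exact fun A hA => sum_inter μ hR (hQ.1 A hA)
        · intro B hB
          have : ∀ A ∈ Q, (μ (A ∩ B)).toReal = (μ (B ∩ A)).toReal := fun A _ => by
            rw [Set.inter_comm]
          rw [Finset.sum_congr rfl this]
          exact sum_inter μ hQ (hR.1 B hB)
        · have h := sum_inter (R := Q) μ hQ MeasurableSet.univ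
          simp only [Set.univ_inter] at h
          rw [h, measure_univ, ENNReal.toReal_one]

lemma preimage_isPartition {M : Type*} [MeasurableSpace M] {P : Finset (Set M)}
    (hP : IsPartition P) {g : M → M} (hg : Measurable g) :
    IsPartition (P.image (fun A => g ⁻¹' A)) := by
  refine ⟨?_, ?_, ?_⟩
  · intro C hC
    obtain ⟨A, hA, rfl⟩ := Finset.mem_image.1 hC
    exact hg (hP.1 A hA)
  · apply Set.eq_univ_of_forall
    intro x
    have : g x ∈ ⋃ A ∈ P, A := by rw [hP.2.1]; trivial
    simp only [Set.mem_iUnion] at this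
    obtain ⟨A, hA, hxA⟩ := this
    simp only [Set.mem_iUnion]
    exact ⟨g ⁻¹' A, Finset.mem_image.2 ⟨A, hA, rfl⟩, hxA⟩
  · intro C hC D hD hne
    obtain ⟨A, hA, rfl⟩ := Finset.mem_image.1 hC
    obtain ⟨B, hB, rfl⟩ := Finset.mem_image.1 hD
    have hAB : A ≠ B := by rintro rfl; exact hne rfl
    rw [← Set.preimage_inter, hP.2.2 A hA B hB hAB, Set.preimage_empty]

lemma joinIter_zero {M : Type*} (f : M → M) (P : Finset (Set M)) :
    joinIter f P 0 = {Set.univ} := by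
  unfold joinIter
  ext C
  simp [Set.iInter_of_empty, eq_comm]

lemma joinIter_succ {M : Type*} (f : M → M) (P : Finset (Set M)) (n : ℕ) :
    joinIter f P (n + 1) = pjoin (joinIter f P n) (P.image (fun A => f^[n] ⁻¹' A)) := by
  ext C
  simp only [joinIter, pjoin, Finset.mem_image, Finset.mem_product, Finset.mem_univ, true_and,
    Prod.exists]
  constructor
  · rintro ⟨a, rfl⟩
    refine ⟨⋂ i : Fin n, f^[(i : ℕ)] ⁻¹' ((a i.castSucc : Set M)),
      f^[n] ⁻¹' (a (Fin.last n) : Set M), ⟨⟨fun i => a i.castSucc, rfl⟩,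
        ⟨(a (Fin.last n) : Set M), (a (Fin.last n)).2, rfl⟩⟩, ?_⟩
    ext x
    simp only [Set.mem_iInter, Set.mem_inter_iff, Set.mem_preimage]
    rw [Fin.forall_fin_succ']
    simp [Fin.coe_castSucc, Fin.val_last]
  · rintro ⟨D, E, ⟨⟨b, rfl⟩, ⟨A, hA, rfl⟩⟩, rfl⟩
    refine ⟨Fin.snoc b ⟨A, hA⟩, ?_⟩
    ext x
    simp only [Set.mem_iInter, Set.mem_inter_iff, Set.mem_preimage]
    rw [Fin.forall_fin_succ']
    simp [Fin.snoc_castSucc, Fin.snoc_last, Fin.coe_castSucc, Fin.val_last]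

lemma isPartition_singleton_univ {M : Type*} [MeasurableSpace M] :
    IsPartition ({Set.univ} : Finset (Set M)) := by
  refine ⟨?_, ?_, ?_⟩ <;> simp [MeasurableSet.univ]

lemma joinIter_le {M : Type*} [MeasurableSpace M] (μ : Measure M) [IsProbabilityMeasure μ]
    (f : M → M) (hf : Measurable f) {P : Finset (Set M)} (hP : IsPartition P) (n : ℕ) :
    IsPartition (joinIter f P n) ∧
      partEnt μ (joinIter f P n) ≤
        ∑ i ∈ Finset.range n, partEnt μ (P.image (fun A => f^[i] ⁻¹' A)) := by
  induction n with
  | zero =>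
    rw [joinIter_zero]
    refine ⟨isPartition_singleton_univ, ?_⟩
    simp [partEnt]
  | succ n ih =>
    have hpre : IsPartition (P.image (fun A => f^[n] ⁻¹' A)) :=
      preimage_isPartition hP (hf.iterate n)
    rw [joinIter_succ]
    refine ⟨pjoin_isPartition ih.1 hpre, ?_⟩
    calc partEnt μ (pjoin (joinIter f P n) (P.image (fun A => f^[n] ⁻¹' A)))
        ≤ partEnt μ (joinIter f P n) + partEnt μ (P.image (fun A => f^[n] ⁻¹' A)) :=
          partEnt_pjoin_le μ ih.1 hpre
      _ ≤ _ := by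
          rw [Finset.sum_range_succ]
          exact add_le_add_left ih.2 _

lemma partEnt_image_le {M : Type*} [MeasurableSpace M] (μ : Measure M) [IsProbabilityMeasure μ]
    (f : M → M) (hf : Measurable f) {P : Finset (Set M)} (hP : IsPartition P) (i : ℕ) :
    partEnt μ (P.image (fun A => f^[i] ⁻¹' A)) ≤ partEnt (Measure.map f^[i] μ) P := by
  rw [partEnt_eq, partEnt_eq]
  calc ∑ C ∈ P.image (fun A => f^[i] ⁻¹' A), negMulLog ((μ C).toReal)
      ≤ ∑ A ∈ P, negMulLog ((μ (f^[i] ⁻¹' A)).toReal) :=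
        sum_image_le' _ _ _ (fun A _ =>
          Real.negMulLog_nonneg (meas01 μ _).1 (meas01 μ _).2)
    _ = _ := Finset.sum_congr rfl (fun A hA => by
        rw [Measure.map_apply (hf.iterate i) (hP.1 A hA)])

lemma partEnt_concave {M : Type*} [MeasurableSpace M] (P : Finset (Set M))
    (m : ℕ) (lam : Fin m → ℝ≥0) (μs : Fin m → Measure M)
    (hprob : ∀ k, IsProbabilityMeasure (μs k)) (hsum : ∑ k, lam k = 1) :
    ∑ k, (lam k : ℝ) * partEnt (μs k) P ≤ partEnt (∑ k, (lam k : ℝ≥0∞) • μs k) P := by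
  simp_rw [partEnt_eq, Finset.mul_sum]
  rw [Finset.sum_comm]
  refine Finset.sum_le_sum (fun A _ => ?_)
  have hsumR : ∑ k, (lam k : ℝ) = 1 := by
    rw [← NNReal.coe_sum, hsum, NNReal.coe_one]
  have jensen := (Real.strictConcaveOn_negMulLog.concaveOn).le_map_sum
    (t := Finset.univ) (w := fun k => (lam k : ℝ)) (p := fun k => ((μs k) A).toReal)
    (fun k _ => NNReal.coe_nonneg _) hsumR (fun k _ => ENNReal.toReal_nonneg)
  have happ : ((∑ k, (lam k : ℝ≥0∞) • μs k) A).toReal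
      = ∑ k, (lam k : ℝ) * ((μs k) A).toReal := by
    have h1 : (∑ k, (lam k : ℝ≥0∞) • μs k) A = ∑ k, (lam k : ℝ≥0∞) * (μs k) A := by
      rw [Measure.finset_sum_apply]
      exact Finset.sum_congr rfl (fun k _ => rfl)
    rw [h1, ENNReal.toReal_sum (fun k _ =>
      ENNReal.mul_ne_top ENNReal.coe_ne_top (measure_ne_top _ _))]
    exact Finset.sum_congr rfl (fun k _ => by rw [ENNReal.toReal_mul, ENNReal.coe_toReal])
  rw [happ]
  simpa [smul_eq_mul] using jensen


/-- `(1/n) H(⋁_{i<n} f⁻ⁱ𝒫, μ) ≤ H(𝒫, (1/n) ∑_{i<n} (f*)ⁱμ)`; in particular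
the entropy of a finite partition is a concave function of the measure:
`H(𝒫, ∑ λₖ μₖ) ≥ ∑ λₖ H(𝒫, μₖ)` for finite convex combinations. -/
theorem stmt_9 {M : Type*} [MeasurableSpace M] (μ : Measure M) [IsProbabilityMeasure μ]
    (f : M → M) (hf : Measurable f)
    (P : Finset (Set M)) (hP : IsPartition P) (n : ℕ) (hn : 1 ≤ n) :
    partEnt μ (joinIter f P n) / n ≤
        partEnt (((n : ℝ≥0∞)⁻¹) • ∑ i ∈ Finset.range n, Measure.map f^[i] μ) P ∧
      ∀ (m : ℕ) (lam : Fin m → ℝ≥0) (μs : Fin m → Measure M),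
        (∀ k, IsProbabilityMeasure (μs k)) → (∑ k, lam k = 1) →
        ∑ k, (lam k : ℝ) * partEnt (μs k) P ≤
          partEnt (∑ k, (lam k : ℝ≥0∞) • μs k) P := by
  constructor
  · have hn0 : (n : ℝ≥0) ≠ 0 := by positivity
    have h1 : partEnt μ (joinIter f P n) ≤
        ∑ i ∈ Finset.range n, partEnt (Measure.map f^[i] μ) P := by
      refine (joinIter_le μ f hf hP n).2.trans (Finset.sum_le_sum (fun i _ =>
        partEnt_image_le μ f hf hP i))
    have hprob : ∀ k : Fin n, IsProbabilityMeasure (Measure.map f^[(k : ℕ)] μ) :=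
      fun k => Measure.isProbabilityMeasure_map (hf.iterate _).aemeasurable
    have hsum : ∑ _k : Fin n, ((n : ℝ≥0))⁻¹ = 1 := by
      rw [Finset.sum_const, Finset.card_univ, Fintype.card_fin, nsmul_eq_mul]
      field_simp
    have hconc := partEnt_concave P n (fun _ => ((n : ℝ≥0))⁻¹)
      (fun k => Measure.map f^[(k : ℕ)] μ) hprob hsum
    have hmeas : (∑ k : Fin n, ((((n : ℝ≥0))⁻¹ : ℝ≥0) : ℝ≥0∞) • Measure.map f^[(k : ℕ)] μ)
        = ((n : ℝ≥0∞)⁻¹) • ∑ i ∈ Finset.range n, Measure.map f^[i] μ := by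
      rw [Finset.smul_sum, ← Fin.sum_univ_eq_sum_range
        (fun i => ((n : ℝ≥0∞)⁻¹) • Measure.map f^[i] μ)]
      refine Finset.sum_congr rfl (fun k _ => ?_)
      congr 1
      simp [ENNReal.coe_inv hn0]
    rw [hmeas] at hconc
    have e : ∑ k : Fin n, ((((n : ℝ≥0))⁻¹ : ℝ≥0) : ℝ) * partEnt (Measure.map f^[(k : ℕ)] μ) P
        = (n : ℝ)⁻¹ * ∑ i ∈ Finset.range n, partEnt (Measure.map f^[i] μ) P := by
      rw [Finset.mul_sum, ← Fin.sum_univ_eq_sum_range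
        (fun i => (n : ℝ)⁻¹ * partEnt (Measure.map f^[i] μ) P)]
      refine Finset.sum_congr rfl (fun k _ => ?_)
      push_cast
      ring
    have h2 : partEnt μ (joinIter f P n) / n ≤
        ∑ k : Fin n, ((((n : ℝ≥0))⁻¹ : ℝ≥0) : ℝ) * partEnt (Measure.map f^[(k : ℕ)] μ) P := by
      rw [e, div_eq_inv_mul]
      exact mul_le_mul_of_nonneg_left h1 (inv_nonneg.2 (Nat.cast_nonneg n))
    exact h2.trans hconc
  · exact fun m lam μs hprob hsum => partEnt_concave P m lam μs hprob hsum
end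

section
/- Let 𝒫 be a finite measurable partition of a compact metric space M and μ a Borel probability measure with μ(∂P) = 0 for every piece P ∈ 𝒫. If (μ_n) is a sequence of Borel probability measures converging to μ in the weak* topology, then lim_{n→∞} H(𝒫, μ_n) = H(𝒫, μ). -/
open MeasureTheory Filter Topology

/-- if `μ(∂P) = 0` for every piece `P` of a finite partition `𝒫` and
`μₙ → μ` weakly*, then `H(𝒫, μₙ) → H(𝒫, μ)`. -/
theorem stmt_10 {M : Type*} [MetricSpace M] [CompactSpace M]
    [MeasurableSpace M] [BorelSpace M]
    (P : Finset (Set M)) (hP : IsPartition P)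
    (μ : Measure M) [IsProbabilityMeasure μ]
    (hbd : ∀ A ∈ P, μ (frontier A) = 0)
    (μs : ℕ → Measure M) [∀ n, IsProbabilityMeasure (μs n)]
    (hconv : ∀ φ : C(M, ℝ),
      Tendsto (fun n => ∫ x, φ x ∂(μs n)) atTop (𝓝 (∫ x, φ x ∂μ))) :
    Tendsto (fun n => partEnt (μs n) P) atTop (𝓝 (partEnt μ P)) := by
  set ν : ProbabilityMeasure M := ⟨μ, inferInstance⟩
  set νs : ℕ → ProbabilityMeasure M := fun n => ⟨μs n, inferInstance⟩
  have hlim : Tendsto νs atTop (𝓝 ν) := by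
    rw [ProbabilityMeasure.tendsto_iff_forall_integral_tendsto]
    intro f
    exact hconv f.toContinuousMap
  have hset : ∀ A ∈ P, Tendsto (fun n => ((μs n) A).toReal) atTop (𝓝 ((μ A).toReal)) := by
    intro A hA
    have := ProbabilityMeasure.tendsto_measure_of_null_frontier_of_tendsto' hlim
      (E := A) (hbd A hA)
    exact (ENNReal.tendsto_toReal (measure_ne_top μ A)).comp this
  unfold partEnt
  apply Tendsto.neg
  apply tendsto_finset_sum
  intro A hA
  exact (Real.continuous_mul_log.tendsto _).comp (hset A hA)
end

section
/- Let f: M → M be a continuous map on a compact metric space that is expansive in the future with expansivity constant α. If 𝒫 is a finite Borel measurable partition with diam(𝒫) < α, then 𝒫 is a generator for f: the σ-algebra generated by the pieces of the partitions ⋁_{j=0}^k f^{−j}𝒫, over all k ≥ 0, is the Borel σ-algebra of M. -/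
open MeasureTheory

/-- for a continuous map, expansive in the future with constant `α`, any
finite Borel partition with diameter `< α` is a generator: the σ-algebra generated by the
pieces of all the joins `⋁_{j=0}^k f⁻ʲ𝒫` is the Borel σ-algebra. -/
theorem stmt_11 {M : Type*} [MetricSpace M] [CompactSpace M]
    (f : M → M) (hf : Continuous f)
    (α : ℝ) (hα : 0 < α)
    (hexp : ∀ x y : M, (∀ n : ℕ, dist (f^[n] x) (f^[n] y) ≤ α) → x = y)
    (P : Finset (Set M))
    (hmeas : ∀ A ∈ P, MeasurableSet[borel M] A)
    (hcover : (⋃ A ∈ P, A) = Set.univ)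
    (hdisj : ∀ A ∈ P, ∀ B ∈ P, A ≠ B → A ∩ B = ∅)
    (hdiam : ∀ A ∈ P, Metric.diam A < α) :
    MeasurableSpace.generateFrom
      {S : Set M | ∃ (k : ℕ) (a : Fin (k + 1) → Set M),
        (∀ i, a i ∈ P) ∧ S = ⋂ i : Fin (k + 1), f^[(i : ℕ)] ⁻¹' a i} = borel M := by
  letI : MeasurableSpace M := borel M
  haveI : BorelSpace M := ⟨rfl⟩
  set G : Set (Set M) := {S : Set M | ∃ (k : ℕ) (a : Fin (k + 1) → Set M),
        (∀ i, a i ∈ P) ∧ S = ⋂ i : Fin (k + 1), f^[(i : ℕ)] ⁻¹' a i} with hGdef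
  -- countability of G
  have hGc : G.Countable := by
    have hsub : G ⊆ ⋃ k : ℕ,
        (fun a : Fin (k + 1) → Set M => ⋂ i : Fin (k + 1), f^[(i : ℕ)] ⁻¹' a i) ''
          {a : Fin (k + 1) → Set M | ∀ i, a i ∈ P} := by
      rintro S ⟨k, a, ha, rfl⟩
      exact Set.mem_iUnion.2 ⟨k, ⟨a, ha, rfl⟩⟩
    refine Set.Countable.mono hsub (Set.countable_iUnion fun k => Set.Countable.image ?_ _)
    have hfin : {a : Fin (k + 1) → Set M | ∀ i, a i ∈ P}.Finite := by
      have : {a : Fin (k + 1) → Set M | ∀ i, a i ∈ P} =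
          Set.pi Set.univ (fun _ => (P : Set (Set M))) := by
        ext a; simp [Set.mem_pi]
      rw [this]
      exact Set.Finite.pi fun i => P.finite_toSet
    exact hfin.countable
  -- choose piece containing each point
  have hp : ∀ z : M, ∃ A, A ∈ P ∧ z ∈ A := by
    intro z
    have hz : z ∈ ⋃ A ∈ P, A := hcover ▸ Set.mem_univ z
    simpa using hz
  choose p hpP hpz using hp
  -- key: pieces eventually fit in open sets
  have key : ∀ U : Set M, IsOpen U → ∀ x ∈ U, ∃ S ∈ G, x ∈ S ∧ S ⊆ U := by
    intro U hU x hx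
    by_contra h
    push_neg at h
    have hy : ∀ k : ℕ, ∃ y, (∀ n ≤ k, f^[n] y ∈ p (f^[n] x)) ∧ y ∉ U := by
      intro k
      have hSG : (⋂ i : Fin (k + 1), f^[(i : ℕ)] ⁻¹' p (f^[(i : ℕ)] x)) ∈ G :=
        ⟨k, _, fun i => hpP _, rfl⟩
      have hxS : x ∈ ⋂ i : Fin (k + 1), f^[(i : ℕ)] ⁻¹' p (f^[(i : ℕ)] x) :=
        Set.mem_iInter.2 fun i => hpz _
      obtain ⟨y, hyS, hyU⟩ := Set.not_subset.1 (h _ hSG hxS)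
      refine ⟨y, fun n hn => ?_, hyU⟩
      exact Set.mem_iInter.1 hyS ⟨n, by omega⟩
    choose y hy1 hy2 using hy
    obtain ⟨z, -, φ, hφ, hz⟩ := isCompact_univ.tendsto_subseq (fun k => Set.mem_univ (y k))
    have hzU : z ∉ U := by
      have hcl : IsClosed Uᶜ := hU.isClosed_compl
      exact hcl.mem_of_tendsto hz (Filter.Eventually.of_forall fun k => hy2 (φ k))
    have hzx : z = x := by
      refine (hexp x z ?_).symm
      intro n
      have hlim : Filter.Tendsto (fun k => dist (f^[n] x) (f^[n] (y (φ k))))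
          Filter.atTop (nhds (dist (f^[n] x) (f^[n] z))) :=
        Filter.Tendsto.dist tendsto_const_nhds (((hf.iterate n).tendsto z).comp hz)
      refine le_of_tendsto hlim ?_
      filter_upwards [Filter.eventually_ge_atTop n] with k hk
      have hk' : n ≤ φ k := hk.trans (hφ.le_apply)
      have h1 : f^[n] (y (φ k)) ∈ p (f^[n] x) := hy1 (φ k) n hk'
      have hb : Bornology.IsBounded (p (f^[n] x)) :=
        isCompact_univ.isBounded.subset (Set.subset_univ _)
      calc dist (f^[n] x) (f^[n] (y (φ k))) ≤ Metric.diam (p (f^[n] x)) :=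
            Metric.dist_le_diam_of_mem hb (hpz _) h1
        _ ≤ α := (hdiam _ (hpP _)).le
    exact hzU (hzx ▸ hx)
  apply le_antisymm
  · refine MeasurableSpace.generateFrom_le ?_
    rintro S ⟨k, a, ha, rfl⟩
    exact MeasurableSet.iInter fun i => (hf.iterate (i : ℕ)).measurable (hmeas _ (ha i))
  · rw [show borel M = MeasurableSpace.generateFrom {s : Set M | IsOpen s} from rfl]
    refine MeasurableSpace.generateFrom_le ?_
    intro U hU
    have hUeq : U = ⋃₀ {S | S ∈ G ∧ S ⊆ U} := by
      ext x
      constructor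
      · intro hx
        obtain ⟨S, hSG, hxS, hSU⟩ := key U hU x hx
        exact ⟨S, ⟨hSG, hSU⟩, hxS⟩
      · rintro ⟨S, ⟨-, hSU⟩, hxS⟩
        exact hSU hxS
    rw [hUeq]
    refine MeasurableSet.sUnion (hGc.mono fun S hS => hS.1) ?_
    intro S hS
    exact MeasurableSpace.measurableSet_generateFrom hS.1
end

section
/- Let f: M → M be continuous on a compact metric space, expansive in the future with constant α, and 𝒫 a finite Borel partition with diam(𝒫) < α. Then for every 0 < δ < α there exists k ≥ 0 such that for every x ∈ M, the piece of the partition ⋁_{i=0}^k f^{−i}𝒫 containing x is contained in the open ball of radius δ centered at x. -/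
open MeasureTheory

/-- for a continuous map `f`, expansive in the future with constant `α`, and a
finite Borel partition `𝒫` with diameter `< α`, for every `0 < δ < α` there exists `k` such
that for every `x` the piece of `⋁_{i=0}^k f⁻ⁱ𝒫` containing `x` is contained in the open ball
of radius `δ` centered at `x` (i.e. every `y` in the same piece satisfies `dist x y < δ`). -/
theorem stmt_12 {M : Type*} [MetricSpace M] [CompactSpace M]
    [MeasurableSpace M] [BorelSpace M]
    (f : M → M) (hf : Continuous f)
    (α : ℝ) (hα : 0 < α)
    (hexp : ∀ x y : M, (∀ n : ℕ, dist (f^[n] x) (f^[n] y) ≤ α) → x = y)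
    (P : Finset (Set M))
    (hmeas : ∀ A ∈ P, MeasurableSet A)
    (hcover : (⋃ A ∈ P, A) = Set.univ)
    (hdisj : ∀ A ∈ P, ∀ B ∈ P, A ≠ B → A ∩ B = ∅)
    (hdiam : ∀ A ∈ P, Metric.diam A < α)
    (δ : ℝ) (hδ0 : 0 < δ) (hδα : δ < α) :
    ∃ k : ℕ, ∀ x y : M,
      (∀ i ≤ k, ∀ A ∈ P, f^[i] x ∈ A → f^[i] y ∈ A) → dist x y < δ := by
  by_contra h
  push_neg at h
  choose u v hpiece hdist using h
  -- key bound: for k ≥ n, the iterates stay within α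
  have key : ∀ n k : ℕ, n ≤ k → dist (f^[n] (u k)) (f^[n] (v k)) ≤ α := by
    intro n k hnk
    have hmem : f^[n] (u k) ∈ ⋃ A ∈ P, A := by rw [hcover]; trivial
    simp only [Set.mem_iUnion] at hmem
    obtain ⟨A, hA, hmemA⟩ := hmem
    have hmemB := hpiece k n hnk A hA hmemA
    have hbdd : Bornology.IsBounded A :=
      (isCompact_univ.isBounded).subset (Set.subset_univ A)
    exact (Metric.dist_le_diam_of_mem hbdd hmemA hmemB).trans (hdiam A hA).le
  -- extract a convergent subsequence of the pairs
  obtain ⟨⟨x, y⟩, -, φ, hφ, hlim⟩ :=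
    isCompact_univ.tendsto_subseq (x := fun k => (u k, v k)) (fun k => Set.mem_univ _)
  have hlimu : Filter.Tendsto (fun k => u (φ k)) Filter.atTop (nhds x) :=
    ((continuous_fst.tendsto _).comp hlim : _)
  have hlimv : Filter.Tendsto (fun k => v (φ k)) Filter.atTop (nhds y) :=
    ((continuous_snd.tendsto _).comp hlim : _)
  have hδle : δ ≤ dist x y := by
    refine ge_of_tendsto (hlimu.dist hlimv) ?_
    filter_upwards with k using hdist (φ k)
  have hxy : x = y := by
    apply hexp
    intro n
    have hcn : Continuous (f^[n]) := hf.iterate n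
    have ht : Filter.Tendsto (fun k => dist (f^[n] (u (φ k))) (f^[n] (v (φ k))))
        Filter.atTop (nhds (dist (f^[n] x) (f^[n] y))) :=
      (((hcn.tendsto x).comp hlimu).dist ((hcn.tendsto y).comp hlimv))
    refine le_of_tendsto ht ?_
    filter_upwards [Filter.eventually_ge_atTop n] with k hk
    exact key n (φ k) (hk.trans (hφ.le_apply))
  rw [hxy, dist_self] at hδle
  linarith
end

section
/- Let K ⊂ [−1,1] be the Cantor set dynamically defined by an expanding map G on I₀ ∪ I₁ as in Bowen's construction, with positive Lebesgue measure m(K) > 0, and such that every atom of generation n has equal Lebesgue measure. Then the probability measure μ_K(B) := m(B ∩ K)/m(K) is invariant under the circle map f extending G, i.e. μ_K(f^{−1}(B)) = μ_K(B) for every Borel set B. -/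
open MeasureTheory
open scoped ENNReal

section CantorAux

variable {I₀ I₁ : Set ℝ} {f : ℝ → ℝ} {Atom : List Bool → Set ℝ}

/-- The defining property of the atoms. -/
def AtomEq (f : ℝ → ℝ) (I₀ I₁ : Set ℝ) (Atom : List Bool → Set ℝ) : Prop :=
  ∀ w : List Bool, Atom w =
    {x : ℝ | ∀ j : Fin w.length, f^[(j : ℕ)] x ∈ if w.get j then I₁ else I₀}

lemma atom_nil (h : AtomEq f I₀ I₁ Atom) : Atom [] = Set.univ := by
  rw [h]
  ext x
  simp only [Set.mem_setOf_eq, Set.mem_univ, iff_true]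
  exact fun j => j.elim0

lemma atom_cons (h : AtomEq f I₀ I₁ Atom) (a : Bool) (w : List Bool) :
    Atom (a :: w) = (if a then I₁ else I₀) ∩ f ⁻¹' Atom w := by
  ext x
  rw [h (a :: w), h w]
  simp only [Set.mem_setOf_eq, Set.mem_inter_iff, Set.mem_preimage]
  constructor
  · intro hx
    refine ⟨by simpa using hx ⟨0, Nat.succ_pos _⟩, fun j => ?_⟩
    have := hx ⟨j.1 + 1, Nat.succ_lt_succ j.2⟩
    simpa [Function.iterate_succ_apply] using this
  · rintro ⟨h0, htail⟩ ⟨j, hj⟩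
    cases j with
    | zero => simpa using h0
    | succ i =>
      have := htail ⟨i, Nat.lt_of_succ_lt_succ hj⟩
      simpa [Function.iterate_succ_apply] using this

lemma atom_append_subset (h : AtomEq f I₀ I₁ Atom) (w u : List Bool) :
    Atom (w ++ u) ⊆ Atom w := by
  induction w with
  | nil => rw [atom_nil h]; exact Set.subset_univ _
  | cons a t ih =>
    rw [List.cons_append, atom_cons h, atom_cons h]
    exact Set.inter_subset_inter_right _ (Set.preimage_mono ih)

lemma mem_atom_append (h : AtomEq f I₀ I₁ Atom) :
    ∀ (w : List Bool) {u : List Bool} {x : ℝ}, x ∈ Atom w → f^[w.length] x ∈ Atom u →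
      x ∈ Atom (w ++ u) := by
  intro w
  induction w with
  | nil => intro u x _ hu; simpa using hu
  | cons a t ih =>
    intro u x hx hu
    rw [List.cons_append, atom_cons h]
    rw [atom_cons h] at hx
    exact ⟨hx.1, ih hx.2 (by simpa [Function.iterate_succ_apply] using hu)⟩

lemma atom_iter_mem (h : AtomEq f I₀ I₁ Atom) :
    ∀ (w : List Bool) {x : ℝ}, x ∈ Atom w → ∀ j < w.length, f^[j] x ∈ I₀ ∪ I₁ := by
  intro w
  induction w with
  | nil => intro x _ j hj; simp at hj
  | cons a t ih =>
    intro x hx j hj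
    rw [atom_cons h] at hx
    cases j with
    | zero =>
      cases a
      · exact Or.inl (by simpa using hx.1)
      · exact Or.inr (by simpa using hx.1)
    | succ i =>
      rw [Function.iterate_succ_apply]
      exact ih hx.2 i (by simpa using hj)

lemma atom_disjoint (h : AtomEq f I₀ I₁ Atom) (hI : Disjoint I₀ I₁) :
    ∀ (w w' : List Bool), w.length = w'.length → w ≠ w' →
      Disjoint (Atom w) (Atom w') := by
  intro w
  induction w with
  | nil =>
    intro w' hl hne
    cases w' with
    | nil => exact absurd rfl hne
    | cons a t => simp at hl
  | cons a t ih =>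
    intro w' hl hne
    cases w' with
    | nil => simp at hl
    | cons a' t' =>
      rw [atom_cons h, atom_cons h]
      by_cases haa : a = a'
      · subst haa
        have ht : t ≠ t' := fun hh => hne (by rw [hh])
        have hd := ih t' (by simpa using hl) ht
        exact Disjoint.mono Set.inter_subset_right Set.inter_subset_right
          (hd.preimage f)
      · refine Disjoint.mono Set.inter_subset_left Set.inter_subset_left ?_
        cases a <;> cases a'
        · exact absurd rfl haa
        · simpa using hI
        · simpa using hI.symm
        · exact absurd rfl haa

lemma atom_inter (h : AtomEq f I₀ I₁ Atom) (hI : Disjoint I₀ I₁) :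
    ∀ (w w' : List Bool), (Atom w ∩ Atom w').Nonempty →
      Atom w ∩ Atom w' = Atom w' ∨ Atom w ∩ Atom w' = Atom w := by
  intro w
  induction w with
  | nil => intro w' _; left; rw [atom_nil h, Set.univ_inter]
  | cons a t ih =>
    intro w' hne
    cases w' with
    | nil => right; rw [atom_nil h, Set.inter_univ]
    | cons a' t' =>
      obtain ⟨x, hx, hx'⟩ := hne
      rw [atom_cons h] at hx hx'
      have haa : a = a' := by
        cases a <;> cases a'
        · rfl
        · exact absurd (by simpa using hx'.1) (Set.disjoint_left.1 hI (by simpa using hx.1))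
        · exact absurd (by simpa using hx.1) (Set.disjoint_left.1 hI (by simpa using hx'.1))
        · rfl
      subst haa
      have hsub : Atom (a :: t) ∩ Atom (a :: t') =
          (if a then I₁ else I₀) ∩ f ⁻¹' (Atom t ∩ Atom t') := by
        rw [atom_cons h, atom_cons h, Set.preimage_inter]
        ext y
        simp only [Set.mem_inter_iff, Set.mem_preimage]
        tauto
      have hnonempty : (Atom t ∩ Atom t').Nonempty := ⟨f x, hx.2, hx'.2⟩
      rcases ih t' hnonempty with hc | hc
      · left; rw [hsub, hc, ← atom_cons h]
      · right; rw [hsub, hc, ← atom_cons h]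

lemma atom_measurable (h : AtomEq f I₀ I₁ Atom) (hf : Measurable f)
    (h0 : MeasurableSet I₀) (h1 : MeasurableSet I₁) (w : List Bool) :
    MeasurableSet (Atom w) := by
  induction w with
  | nil => rw [atom_nil h]; exact MeasurableSet.univ
  | cons a t ih =>
    rw [atom_cons h]
    refine MeasurableSet.inter ?_ (hf ih)
    cases a <;> simpa

open Classical in
/-- The itinerary of a point. -/
noncomputable def itin (f : ℝ → ℝ) (I₁ : Set ℝ) : ℝ → ℕ → List Bool
  | _, 0 => []
  | x, n + 1 => (if x ∈ I₁ then true else false) :: itin f I₁ (f x) n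

lemma itin_length (f : ℝ → ℝ) (I₁ : Set ℝ) : ∀ (x : ℝ) (n : ℕ),
    (itin f I₁ x n).length = n := by
  intro x n
  induction n generalizing x with
  | zero => rfl
  | succ m ih => rw [itin]; simp [ih]

lemma itin_mem (h : AtomEq f I₀ I₁ Atom) :
    ∀ (n : ℕ) (x : ℝ), (∀ k, f^[k] x ∈ I₀ ∪ I₁) → x ∈ Atom (itin f I₁ x n) := by
  intro n
  induction n with
  | zero => intro x _; rw [itin, atom_nil h]; trivial
  | succ m ih =>
    intro x hx
    rw [itin, atom_cons h]
    refine ⟨?_, ih (f x) (fun k => by simpa [Function.iterate_succ_apply] using hx (k + 1))⟩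
    by_cases hx1 : x ∈ I₁
    · simp [hx1]
    · have h0 := hx 0
      simp only [Function.iterate_zero, id_eq] at h0
      rcases h0 with h0 | h0
      · simpa [hx1] using h0
      · exact absurd h0 hx1

lemma atom_expansion (h : AtomEq f I₀ I₁ Atom) {lam : ℝ} (hlam : 1 < lam)
    (hexp₀ : ∀ x ∈ I₀, ∀ y ∈ I₀, lam * |x - y| ≤ |f x - f y|)
    (hexp₁ : ∀ x ∈ I₁, ∀ y ∈ I₁, lam * |x - y| ≤ |f x - f y|) :
    ∀ (w : List Bool) {x y : ℝ}, x ∈ Atom w → y ∈ Atom w →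
      lam ^ w.length * |x - y| ≤ |f^[w.length] x - f^[w.length] y| := by
  intro w
  induction w with
  | nil => intro x y _ _; simp
  | cons a t ih =>
    intro x y hx hy
    rw [atom_cons h] at hx hy
    have h1 : lam * |x - y| ≤ |f x - f y| := by
      cases a
      · exact hexp₀ x (by simpa using hx.1) y (by simpa using hy.1)
      · exact hexp₁ x (by simpa using hx.1) y (by simpa using hy.1)
    have h2 := ih hx.2 hy.2
    calc lam ^ (a :: t).length * |x - y| = lam ^ t.length * (lam * |x - y|) := by
          rw [List.length_cons, pow_succ]; ring
      _ ≤ lam ^ t.length * |f x - f y| :=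
          mul_le_mul_of_nonneg_left h1 (pow_nonneg (by linarith) _)
      _ ≤ |f^[t.length] (f x) - f^[t.length] (f y)| := h2
      _ = |f^[(a :: t).length] x - f^[(a :: t).length] y| := by
          rw [List.length_cons, Function.iterate_succ_apply, Function.iterate_succ_apply]

lemma exists_ofFn_eq {u : List Bool} {m : ℕ} (hl : u.length = m) :
    ∃ v : Fin m → Bool, List.ofFn v = u := by
  subst hl; exact ⟨u.get, List.ofFn_get u⟩

end CantorAux

set_option maxHeartbeats 1000000 in
/-- let `K` be the Cantor set dynamically defined (as in Bowen's construction)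
by an expanding map with two increasing surjective branches on `I₀ = [−1,−b₀]`,
`I₁ = [b₀,1]`, with `m(K) > 0` and all atoms of the same generation of equal Lebesgue
measure.  Then `μ_K(B) := m(B ∩ K)/m(K)` is invariant under the circle map `f` extending the
branches: `μ_K(f⁻¹(B)) = μ_K(B)` for every Borel set `B`. -/
theorem stmt_18 (b₀ : ℝ) (hb₀ : 0 < b₀) (hb₀1 : b₀ < 1)
    (I₀ I₁ : Set ℝ) (hI₀ : I₀ = Set.Icc (-1) (-b₀)) (hI₁ : I₁ = Set.Icc b₀ 1)
    (f : ℝ → ℝ) (hfmeas : Measurable f)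
    (lam : ℝ) (hlam : 1 < lam)
    (hexp₀ : ∀ x ∈ I₀, ∀ y ∈ I₀, lam * |x - y| ≤ |f x - f y|)
    (hexp₁ : ∀ x ∈ I₁, ∀ y ∈ I₁, lam * |x - y| ≤ |f x - f y|)
    (hmono₀ : StrictMonoOn f I₀) (hmono₁ : StrictMonoOn f I₁)
    (hsurj₀ : f '' I₀ = Set.Icc (-1) 1) (hsurj₁ : f '' I₁ = Set.Icc (-1) 1)
    -- the dynamically defined Cantor set
    (K : Set ℝ) (hKdef : K = {x : ℝ | ∀ n : ℕ, f^[n] x ∈ I₀ ∪ I₁})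
    (hKpos : 0 < volume K)
    -- the atoms `I_{a₀…a_{n−1}}`: points whose itinerary starts with the word `w`
    (Atom : List Bool → Set ℝ)
    (hAtom : ∀ w : List Bool, Atom w =
      {x : ℝ | ∀ j : Fin w.length, f^[(j : ℕ)] x ∈ if w.get j then I₁ else I₀})
    -- all atoms of the same generation have equal Lebesgue measure
    (hequal : ∀ w w' : List Bool, w.length = w'.length →
      volume (Atom w) = volume (Atom w'))
    (B : Set ℝ) (hB : MeasurableSet B) :
    volume (f ⁻¹' B ∩ K) / volume K = volume (B ∩ K) / volume K := by
  classical
  have hA : AtomEq f I₀ I₁ Atom := hAtom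
  -- basic facts about the intervals
  have hIdisj : Disjoint I₀ I₁ := by
    rw [hI₀, hI₁, Set.disjoint_left]
    rintro x ⟨hx1, hx2⟩ ⟨hx3, hx4⟩
    linarith
  have hIcc : I₀ ∪ I₁ ⊆ Set.Icc (-1 : ℝ) 1 := by
    rw [hI₀, hI₁]
    rintro x (⟨h1, h2⟩ | ⟨h1, h2⟩) <;> exact ⟨by linarith, by linarith⟩
  have hI0m : MeasurableSet I₀ := by rw [hI₀]; exact measurableSet_Icc
  have hI1m : MeasurableSet I₁ := by rw [hI₁]; exact measurableSet_Icc
  have hKmem : ∀ x, x ∈ K ↔ ∀ n : ℕ, f^[n] x ∈ I₀ ∪ I₁ := by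
    intro x; rw [hKdef]; rfl
  have hKsub : K ⊆ Set.Icc (-1 : ℝ) 1 := fun x hx => hIcc (by simpa using (hKmem x).1 hx 0)
  have hKfin : volume K ≠ ⊤ :=
    ((measure_mono hKsub).trans_lt (by simp)).ne
  have hKmeas : MeasurableSet K := by
    have : K = ⋂ n : ℕ, f^[n] ⁻¹' (I₀ ∪ I₁) := by
      ext x; rw [hKmem]; simp
    rw [this]
    exact MeasurableSet.iInter fun n => (hfmeas.iterate n) (hI0m.union hI1m)
  have hfK : ∀ x ∈ K, f x ∈ K := by
    intro x hx
    rw [hKmem] at hx ⊢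
    intro n
    simpa [Function.iterate_succ_apply] using hx (n + 1)
  have hAm : ∀ w, MeasurableSet (Atom w) := atom_measurable hA hfmeas hI0m hI1m
  -- atoms of nonempty words live in `[-1, 1]`
  have hAIcc : ∀ (w : List Bool), w ≠ [] → Atom w ⊆ Set.Icc (-1 : ℝ) 1 := by
    intro w hw x hx
    have := atom_iter_mem hA w hx 0 (by
      cases w with
      | nil => exact absurd rfl hw
      | cons a t => simp)
    exact hIcc (by simpa using this)
  -- the approximating unions
  set V : List Bool → ℕ → Set ℝ :=
    fun w m => ⋃ v : Fin m → Bool, Atom (w ++ List.ofFn v) with hV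
  have hVmeas : ∀ w m, MeasurableSet (V w m) :=
    fun w m => MeasurableSet.iUnion fun v => hAm _
  have hVanti : ∀ w, Antitone (V w) := by
    intro w
    refine antitone_nat_of_succ_le fun m => ?_
    rintro x hx
    obtain ⟨v, hv⟩ := Set.mem_iUnion.1 hx
    refine Set.mem_iUnion.2 ⟨fun i => v i.castSucc, ?_⟩
    have : List.ofFn v = List.ofFn (fun i : Fin m => v i.castSucc) ++ [v (Fin.last m)] := by
      rw [List.ofFn_succ']
      simp [List.concat_eq_append]
    have hsub : Atom (w ++ List.ofFn v) ⊆ Atom (w ++ List.ofFn fun i : Fin m => v i.castSucc) := by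
      rw [this, ← List.append_assoc]
      exact atom_append_subset hA _ _
    exact hsub hv
  -- K ∩ Atom w as a decreasing intersection
  have hAK : ∀ w : List Bool, Atom w ∩ K = ⋂ m, V w m := by
    intro w
    ext x
    constructor
    · rintro ⟨hxw, hxK⟩
      refine Set.mem_iInter.2 fun m => ?_
      have hit : ∀ k, f^[k] (f^[w.length] x) ∈ I₀ ∪ I₁ := by
        intro k
        rw [← Function.iterate_add_apply]
        exact (hKmem x).1 hxK _
      obtain ⟨v, hv⟩ := exists_ofFn_eq (itin_length f I₁ (f^[w.length] x) m)
      refine Set.mem_iUnion.2 ⟨v, ?_⟩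
      rw [hv]
      exact mem_atom_append hA w hxw (itin_mem hA m _ hit)
    · intro hx
      have hx' := Set.mem_iInter.1 hx
      have hxw : x ∈ Atom w := by
        obtain ⟨v, hv⟩ := Set.mem_iUnion.1 (hx' 0)
        simpa [List.ofFn_zero] using hv
      refine ⟨hxw, (hKmem x).2 fun j => ?_⟩
      obtain ⟨v, hv⟩ := Set.mem_iUnion.1 (hx' (j + 1))
      refine atom_iter_mem hA _ hv j ?_
      simp only [List.length_append, List.length_ofFn]
      omega
  -- measure of the approximations
  have hVm : ∀ (w : List Bool) (m : ℕ),
      volume (V w m) = 2 ^ m * volume (Atom (List.replicate (w.length + m) false)) := by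
    intro w m
    have hdisj : Pairwise (Function.onFun Disjoint fun v : Fin m → Bool =>
        Atom (w ++ List.ofFn v)) := by
      intro v v' hvv'
      refine atom_disjoint hA hIdisj _ _ (by simp) ?_
      intro hcon
      exact hvv' (List.ofFn_injective (List.append_cancel_left hcon))
    rw [hV]
    rw [measure_iUnion hdisj fun v => hAm _]
    have hconst : ∀ v : Fin m → Bool,
        volume (Atom (w ++ List.ofFn v)) = volume (Atom (List.replicate (w.length + m) false)) :=
      fun v => hequal _ _ (by simp)
    rw [tsum_congr hconst, tsum_fintype]
    simp only [Finset.sum_const, Finset.card_univ, Fintype.card_fun, Fintype.card_bool,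
      Fintype.card_fin, nsmul_eq_mul, Nat.cast_pow, Nat.cast_ofNat]
  have hVfin : ∀ w : List Bool, volume (V w 1) ≠ ⊤ := by
    intro w
    have hsub : V w 1 ⊆ Set.Icc (-1 : ℝ) 1 := by
      refine Set.iUnion_subset fun v => hAIcc _ ?_
      simp
    exact ((measure_mono hsub).trans_lt (by simp)).ne
  -- the key measure identity
  have hclose : ∀ w : List Bool, 2 ^ w.length * volume (Atom w ∩ K) = volume K := by
    intro w
    have T1 : Filter.Tendsto (fun m => volume (V w m)) Filter.atTop
        (nhds (volume (Atom w ∩ K))) := by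
      rw [hAK w]
      exact tendsto_measure_iInter_atTop (fun m => (hVmeas w m).nullMeasurableSet)
        (hVanti w) ⟨1, hVfin w⟩
    have T2 : Filter.Tendsto (fun m => volume (V [] m)) Filter.atTop (nhds (volume K)) := by
      have : Atom [] ∩ K = K := by rw [atom_nil hA, Set.univ_inter]
      have h := tendsto_measure_iInter_atTop (μ := volume)
        (fun m => (hVmeas [] m).nullMeasurableSet) (hVanti []) ⟨1, hVfin []⟩
      rw [← hAK, this] at h
      exact h
    have T3 : Filter.Tendsto (fun m => (2 : ℝ≥0∞) ^ w.length * volume (V w m)) Filter.atTop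
        (nhds ((2 : ℝ≥0∞) ^ w.length * volume (Atom w ∩ K))) :=
      ENNReal.Tendsto.const_mul T1 (Or.inr (by simp))
    have heqfun : ∀ m, (2 : ℝ≥0∞) ^ w.length * volume (V w m) = volume (V [] (m + w.length)) := by
      intro m
      rw [hVm, hVm]
      simp only [List.length_nil, zero_add]
      rw [← mul_assoc, ← pow_add, Nat.add_comm w.length m]
    have T3' : Filter.Tendsto (fun m => volume (V [] (m + w.length))) Filter.atTop
        (nhds ((2 : ℝ≥0∞) ^ w.length * volume (Atom w ∩ K))) := by
      refine Filter.Tendsto.congr (fun m => heqfun m) T3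
    have T4 : Filter.Tendsto (fun m => volume (V [] (m + w.length))) Filter.atTop
        (nhds (volume K)) := by
      exact T2.comp (Filter.tendsto_add_atTop_nat _)
    exact tendsto_nhds_unique T3' T4
  have hkey : ∀ w : List Bool, volume (Atom w ∩ K) = volume K / 2 ^ w.length := by
    intro w
    exact (ENNReal.eq_div_iff (by simp) (by simp)).2 (hclose w)
  -- the σ-algebra generated by atoms
  set S : Set (Set ℝ) := {s | ∃ w : List Bool, s = Atom w} with hS
  have hm'le : MeasurableSpace.generateFrom S ≤ Real.measurableSpace :=
    MeasurableSpace.generateFrom_le (by rintro t ⟨w, rfl⟩; exact hAm w)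
  have hpi : IsPiSystem S := by
    rintro s ⟨w, rfl⟩ t ⟨w', rfl⟩ hne
    rcases atom_inter hA hIdisj w w' hne with hc | hc
    · exact ⟨w', hc⟩
    · exact ⟨w, hc⟩
  -- invariance on m'-measurable sets
  have hC : ∀ t : Set ℝ, MeasurableSet[MeasurableSpace.generateFrom S] t →
      volume (f ⁻¹' t ∩ K) = volume (t ∩ K) := by
    refine MeasurableSpace.induction_on_inter (m := MeasurableSpace.generateFrom S) (s := S) rfl hpi (by simp) ?_ ?_ ?_
    · -- basic: atoms
      rintro t ⟨w, rfl⟩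
      have hset : f ⁻¹' Atom w ∩ K = (Atom (false :: w) ∩ K) ∪ (Atom (true :: w) ∩ K) := by
        ext x
        simp only [Set.mem_inter_iff, Set.mem_preimage, Set.mem_union]
        constructor
        · rintro ⟨hfx, hxK⟩
          rcases (hKmem x).1 hxK 0 with h0 | h0
          · exact Or.inl ⟨by rw [atom_cons hA]; exact ⟨by simpa using h0, hfx⟩, hxK⟩
          · exact Or.inr ⟨by rw [atom_cons hA]; exact ⟨by simpa using h0, hfx⟩, hxK⟩
        · rintro (⟨hx, hxK⟩ | ⟨hx, hxK⟩) <;>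
            [rw [atom_cons hA] at hx; rw [atom_cons hA] at hx] <;>
            exact ⟨hx.2, hxK⟩
      rw [hset]
      have hdisj2 : Disjoint (Atom (false :: w) ∩ K) (Atom (true :: w) ∩ K) := by
        refine Disjoint.mono Set.inter_subset_left Set.inter_subset_left ?_
        exact atom_disjoint hA hIdisj _ _ (by simp) (by simp)
      rw [measure_union hdisj2 ((hAm _).inter hKmeas)]
      rw [hkey, hkey, hkey]
      simp only [List.length_cons]
      rw [ENNReal.div_add_div_same, ← two_mul]
      rw [pow_succ]
      rw [mul_comm ((2 : ℝ≥0∞) ^ w.length) 2, ENNReal.mul_div_mul_left _ _ (by simp) (by simp)]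
    · -- complement
      intro t htm hteq
      have htB : MeasurableSet t := hm'le t htm
      have h1 : f ⁻¹' tᶜ ∩ K = K \ (f ⁻¹' t ∩ K) := by
        ext x
        simp only [Set.mem_inter_iff, Set.mem_preimage, Set.mem_compl_iff, Set.mem_diff]
        tauto
      have h2 : tᶜ ∩ K = K \ (t ∩ K) := by
        ext x
        simp only [Set.mem_inter_iff, Set.mem_compl_iff, Set.mem_diff]
        tauto
      rw [h1, h2]
      rw [measure_diff Set.inter_subset_right ((hfmeas htB).inter hKmeas).nullMeasurableSet
        (((measure_mono Set.inter_subset_right).trans_lt hKfin.lt_top).ne)]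
      rw [measure_diff Set.inter_subset_right (htB.inter hKmeas).nullMeasurableSet
        (((measure_mono Set.inter_subset_right).trans_lt hKfin.lt_top).ne)]
      rw [hteq]
    · -- disjoint unions
      intro g hgdisj hgm hgC
      have h1 : f ⁻¹' (⋃ i, g i) ∩ K = ⋃ i, (f ⁻¹' g i ∩ K) := by
        rw [Set.preimage_iUnion, Set.iUnion_inter]
      have h2 : (⋃ i, g i) ∩ K = ⋃ i, (g i ∩ K) := by
        rw [Set.iUnion_inter]
      rw [h1, h2]
      rw [measure_iUnion (fun i j hij => ((hgdisj hij).preimage f).mono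
          Set.inter_subset_left Set.inter_subset_left)
          (fun i => (hfmeas (hm'le _ (hgm i))).inter hKmeas)]
      rw [measure_iUnion (fun i j hij => (hgdisj hij).mono
          Set.inter_subset_left Set.inter_subset_left)
          (fun i => (hm'le _ (hgm i)).inter hKmeas)]
      exact tsum_congr hgC
  -- every Borel set agrees with an m'-measurable set on K
  have htrace : ∀ t : Set ℝ, MeasurableSet t →
      ∃ t' : Set ℝ, MeasurableSet[MeasurableSpace.generateFrom S] t' ∧ t' ∩ K = t ∩ K := by
    have hgen : ∀ t : Set ℝ,
        MeasurableSet[MeasurableSpace.generateFrom (Set.range (Set.Iio (α := ℝ)))] t →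
        ∃ t' : Set ℝ, MeasurableSet[MeasurableSpace.generateFrom S] t' ∧ t' ∩ K = t ∩ K := by
      intro t ht
      refine MeasurableSpace.generateFrom_induction (α := ℝ)
        (Set.range (Set.Iio (α := ℝ)))
        (fun s _ => ∃ s' : Set ℝ, MeasurableSet[MeasurableSpace.generateFrom S] s' ∧ s' ∩ K = s ∩ K)
        ?_ ?_ ?_ ?_ t ht
      · -- half-lines
        rintro s ⟨a, rfl⟩ -
        refine ⟨⋃ w ∈ {w : List Bool | Atom w ∩ K ⊆ Set.Iio a}, Atom w, ?_, ?_⟩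
        · exact MeasurableSet.biUnion (Set.to_countable _)
            (fun w _ => MeasurableSpace.measurableSet_generateFrom ⟨w, rfl⟩)
        · ext x
          simp only [Set.mem_inter_iff, Set.mem_iUnion, Set.mem_setOf_eq]
          constructor
          · rintro ⟨⟨w, hwS, hxw⟩, hxK⟩
            exact ⟨hwS ⟨hxw, hxK⟩, hxK⟩
          · rintro ⟨hxa, hxK⟩
            have hxK' : ∀ k, f^[k] x ∈ I₀ ∪ I₁ := (hKmem x).1 hxK
            have hax : (0 : ℝ) < a - x := by
              simp only [Set.mem_Iio] at hxa; linarith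
            obtain ⟨n, hn⟩ := pow_unbounded_of_one_lt (2 / (a - x)) hlam
            set w := itin f I₁ x n with hw
            have hxw : x ∈ Atom w := itin_mem hA n x hxK'
            refine ⟨⟨w, ?_, hxw⟩, hxK⟩
            rintro y ⟨hyw, hyK⟩
            have hyK' : ∀ k, f^[k] y ∈ I₀ ∪ I₁ := (hKmem y).1 hyK
            have hexp := atom_expansion hA hlam hexp₀ hexp₁ w hxw hyw
            have hlen : w.length = n := itin_length f I₁ x n
            rw [hlen] at hexp
            have hfx : f^[n] x ∈ Set.Icc (-1 : ℝ) 1 := hIcc (hxK' n)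
            have hfy : f^[n] y ∈ Set.Icc (-1 : ℝ) 1 := hIcc (hyK' n)
            have hbound : |f^[n] x - f^[n] y| ≤ 2 := by
              rw [abs_sub_le_iff]
              constructor <;> [skip; skip] <;>
                · obtain ⟨ha1, ha2⟩ := hfx
                  obtain ⟨hb1, hb2⟩ := hfy
                  linarith
            have hlampos : (0 : ℝ) < lam ^ n := pow_pos (by linarith) n
            have h2small : lam ^ n * |x - y| ≤ 2 := hexp.trans hbound
            have hxy : |x - y| < a - x := by
              have h2' : 2 < lam ^ n * (a - x) := by
                rw [div_lt_iff₀ hax] at hn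
                linarith
              nlinarith [abs_nonneg (x - y)]
            have : y - x ≤ |x - y| := by
              rw [abs_sub_comm]
              exact le_abs_self _
            simp only [Set.mem_Iio]
            linarith
      · exact ⟨∅, @MeasurableSet.empty _ (MeasurableSpace.generateFrom S), by simp⟩
      · rintro s hs ⟨s', hs'm, hs'K⟩
        refine ⟨s'ᶜ, hs'm.compl, ?_⟩
        ext x
        have := Set.ext_iff.1 hs'K x
        simp only [Set.mem_inter_iff] at this ⊢
        simp only [Set.mem_compl_iff]
        tauto
      · intro g hg hgp
        choose g' hg'm hg'K using hgp
        refine ⟨⋃ i, g' i, MeasurableSet.iUnion hg'm, ?_⟩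
        rw [Set.iUnion_inter, Set.iUnion_inter]
        exact Set.iUnion_congr hg'K
    intro t ht
    refine hgen t ?_
    rw [← borel_eq_generateFrom_Iio]
    rwa [← BorelSpace.measurable_eq (α := ℝ)]
  -- conclude
  obtain ⟨B', hB'm, hB'K⟩ := htrace B hB
  have hKstep : ∀ t : Set ℝ, f ⁻¹' t ∩ K = f ⁻¹' (t ∩ K) ∩ K := by
    intro t
    ext x
    simp only [Set.mem_inter_iff, Set.mem_preimage]
    exact ⟨fun ⟨h1, h2⟩ => ⟨⟨h1, hfK x h2⟩, h2⟩, fun ⟨⟨h1, _⟩, h2⟩ => ⟨h1, h2⟩⟩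
  have hmain : volume (f ⁻¹' B ∩ K) = volume (B ∩ K) := by
    calc volume (f ⁻¹' B ∩ K) = volume (f ⁻¹' (B ∩ K) ∩ K) := by rw [← hKstep]
      _ = volume (f ⁻¹' (B' ∩ K) ∩ K) := by rw [hB'K]
      _ = volume (f ⁻¹' B' ∩ K) := by rw [← hKstep]
      _ = volume (B' ∩ K) := hC B' hB'm
      _ = volume (B ∩ K) := by rw [hB'K]
  rw [hmain]
end
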